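/- Let n ≥ 5 with n ≡ 4 (mod 6), and let x_0,...,x_{n-1} be nonnegative integers (indices modulo n) with x_i ≤ 1, x_i + x_{i+1} + x_{i+2} ≥ 2 for all i, and Σ_{i=0}^{n-1} x_i < 2⌊n/3⌋ + 2. Then x is a cyclic rotation of the sequence (1,1,0,1,1,0,...,1,1,0,1). -/

import Mathlib

theorem solution_is_rotation_4_mod_6 (n : ℕ) (hn : 5 ≤ n) (h6 : n % 6 = 4) (x : ZMod n → ℕ)
    (hle : ∀ i, x i ≤ 1) (hsum : ∀ i, 2 ≤ x i + x (i + 1) + x (i + 2))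
    (hlt : ∑ i ∈ Finset.range n, x (i : ZMod n) < 2 * (n / 3) + 2) :
    ∃ r : ℕ, ∀ i < n, x (i : ZMod n) = if (i + r) % n % 3 = 2 then 0 else 1 := by
  haveI : NeZero n := ⟨by omega⟩
  have hcard : Fintype.card (ZMod n) = n := ZMod.card n
  have hne : ∀ m : ℕ, 0 < m → m < n → ((m : ZMod n) ≠ 0) := by
    intro m h1 h2
    rw [Ne, ZMod.natCast_eq_zero_iff]
    exact Nat.not_dvd_of_pos_of_lt h1 h2
  -- convert range-sum to univ-sum
  have hrange : ∀ (g : ZMod n → ℕ),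
      ∑ i ∈ Finset.range n, g (i : ZMod n) = ∑ j : ZMod n, g j := by
    intro g
    refine Finset.sum_nbij' (fun i => (i : ZMod n)) (fun j => j.val) ?_ ?_ ?_ ?_ ?_ <;>
      simp (config := {contextual := true}) [ZMod.val_cast_of_lt, ZMod.val_lt,
        Finset.mem_range, Nat.mod_eq_of_lt]
  set S : ℕ := ∑ j : ZMod n, x j with hSdef
  rw [hrange] at hlt
  have hshift : ∀ c : ZMod n, ∑ j : ZMod n, x (j + c) = S :=
    fun c => Fintype.sum_equiv (Equiv.addRight c) _ _ (fun j => rfl)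
  -- sum of windows
  have hwin : ∑ j : ZMod n, (x j + x (j + 1) + x (j + 2)) = 3 * S := by
    rw [Finset.sum_add_distrib, Finset.sum_add_distrib, hshift 1, hshift 2]
    ring_nf
    linarith [hSdef]
  have hwinlow : 2 * n ≤ 3 * S := by
    have : ∑ j : ZMod n, 2 ≤ ∑ j : ZMod n, (x j + x (j + 1) + x (j + 2)) :=
      Finset.sum_le_sum (fun j _ => hsum j)
    simpa [Finset.sum_const, Finset.card_univ, hcard, hwin, mul_comm] using this
  have hSval : 3 * S = 2 * n + 1 := by omega
  -- exactly one window has sum 3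
  have hg : ∑ j : ZMod n, (x j + x (j + 1) + x (j + 2) - 2) = 1 := by
    have h1 : ∑ j : ZMod n, (x j + x (j + 1) + x (j + 2)) =
        ∑ j : ZMod n, ((x j + x (j + 1) + x (j + 2) - 2) + 2) :=
      Finset.sum_congr rfl (fun j _ => by have := hsum j; omega)
    have h2 : ∑ j : ZMod n, ((x j + x (j + 1) + x (j + 2) - 2) + 2) =
        (∑ j : ZMod n, (x j + x (j + 1) + x (j + 2) - 2)) + n * 2 := by
      rw [Finset.sum_add_distrib, Finset.sum_const, Finset.card_univ, hcard, smul_eq_mul]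
    omega
  obtain ⟨i₀, -, hi₀ne⟩ := Finset.exists_ne_zero_of_sum_ne_zero (by omega : (∑ j : ZMod n, (x j + x (j + 1) + x (j + 2) - 2)) ≠ 0)
  have hi₀le : x i₀ + x (i₀ + 1) + x (i₀ + 2) - 2 ≤ 1 := by
    refine le_of_le_of_eq ?_ hg
    exact Finset.single_le_sum (f := fun j : ZMod n => x j + x (j + 1) + x (j + 2) - 2)
      (fun j _ => Nat.zero_le _) (Finset.mem_univ i₀)
  have hf3 : x i₀ + x (i₀ + 1) + x (i₀ + 2) = 3 := by have := hsum i₀; omega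
  have hrest : ∀ j : ZMod n, j ≠ i₀ → x j + x (j + 1) + x (j + 2) = 2 := by
    intro j hj
    have herase : ∑ j ∈ Finset.univ.erase i₀, (x j + x (j + 1) + x (j + 2) - 2) = 0 := by
      have h := Finset.add_sum_erase Finset.univ
        (fun j : ZMod n => x j + x (j + 1) + x (j + 2) - 2) (Finset.mem_univ i₀)
      beta_reduce at h
      omega
    have := (Finset.sum_eq_zero_iff.mp herase) j (Finset.mem_erase.mpr ⟨hj, Finset.mem_univ j⟩)
    have := hsum j
    omega
  -- base values
  have hb0 : x i₀ = 1 := by have := hle i₀; have := hle (i₀ + 1); have := hle (i₀ + 2); omega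
  have hb1 : x (i₀ + 1) = 1 := by
    have := hle i₀; have := hle (i₀ + 1); have := hle (i₀ + 2); omega
  have hb2 : x (i₀ + 2) = 1 := by
    have := hle i₀; have := hle (i₀ + 1); have := hle (i₀ + 2); omega
  have hb3 : x (i₀ + 3) = 0 := by
    have h := hrest (i₀ + 1) (by
      intro h
      have : (1 : ZMod n) = 0 := by
        have := congrArg (fun z => z - i₀) h; simpa using this
      exact hne 1 (by omega) (by omega) (by exact_mod_cast this))
    have e1 : i₀ + 1 + 1 = i₀ + 2 := by ring
    have e2 : i₀ + 1 + 2 = i₀ + 3 := by ring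
    rw [e1, e2] at h
    omega
  -- step lemma
  have hstep : ∀ j : ZMod n, j ≠ i₀ → j + 1 ≠ i₀ → x (j + 3) = x j := by
    intro j h1 h2
    have e1 := hrest j h1
    have e2 := hrest (j + 1) h2
    have a1 : j + 1 + 1 = j + 2 := by ring
    have a2 : j + 1 + 2 = j + 3 := by ring
    rw [a1, a2] at e2
    omega
  -- main induction
  have main : ∀ t, t ≤ n - 2 →
      x (i₀ + 1 + (t : ℕ)) = if t % 3 = 2 then 0 else 1 := by
    intro t
    induction t using Nat.strong_induction_on with
    | _ t ih =>
      intro ht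
      match t, ih with
      | 0, _ => simpa using hb1
      | 1, _ => norm_num; rw [show i₀ + 1 + (1 : ZMod n) = i₀ + 2 by ring]; exact hb2
      | 2, _ => norm_num; rw [show i₀ + 1 + (2 : ZMod n) = i₀ + 3 by ring]; exact hb3
      | (t + 3), ih =>
        have h1 : x (i₀ + 1 + ((t : ℕ) : ZMod n)) = if t % 3 = 2 then 0 else 1 :=
          ih t (by omega) (by omega)
        have hd1 : i₀ + 1 + ((t : ℕ) : ZMod n) ≠ i₀ := by
          intro h
          have : ((t + 1 : ℕ) : ZMod n) = 0 := by
            have := congrArg (fun z => z - i₀) h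
            push_cast at this ⊢
            simpa [add_comm, add_assoc, add_left_comm] using this
          exact hne (t + 1) (by omega) (by omega) this
        have hd2 : i₀ + 1 + ((t : ℕ) : ZMod n) + 1 ≠ i₀ := by
          intro h
          have : ((t + 2 : ℕ) : ZMod n) = 0 := by
            have := congrArg (fun z => z - i₀) h
            push_cast at this ⊢
            simpa [add_comm, add_assoc, add_left_comm, one_add_one_eq_two] using this
          exact hne (t + 2) (by omega) (by omega) this
        have hs := hstep _ hd1 hd2
        have e : i₀ + 1 + ((t : ℕ) : ZMod n) + 3 = i₀ + 1 + ((t + 3 : ℕ) : ZMod n) := by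
          push_cast; ring
        rw [e] at hs
        rw [hs, h1]
        have : (t + 3) % 3 = t % 3 := by omega
        rw [this]
  -- assemble
  refine ⟨2 * n - 1 - i₀.val, fun i hi => ?_⟩
  have hiv : i₀.val < n := ZMod.val_lt i₀
  set r : ℕ := 2 * n - 1 - i₀.val with hr
  set t : ℕ := (i + r) % n with htdef
  have htlt : t < n := Nat.mod_lt _ (by omega)
  have hcast : (i : ZMod n) = i₀ + 1 + (t : ℕ) := by
    have h1 : ((i₀.val + 1 + t : ℕ) : ZMod n) = (i : ZMod n) := by
      rw [ZMod.natCast_eq_natCast_iff]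
      calc i₀.val + 1 + t ≡ i₀.val + 1 + (i + r) [MOD n] :=
            Nat.ModEq.add_left _ ((Nat.mod_modEq _ n))
        _ = i + 2 * n := by omega
        _ ≡ i + 0 [MOD n] := Nat.ModEq.add_left _ ((Nat.modEq_zero_iff_dvd).mpr ⟨2, by ring⟩)
        _ = i := by omega
    rw [← h1]
    push_cast
    rw [ZMod.natCast_rightInverse i₀]
  rcases Nat.lt_or_ge t (n - 1) with h | h
  · have := main t (by omega)
    rw [hcast, this]
  · have htn : t = n - 1 := by omega
    have hmod3 : t % 3 ≠ 2 := by omega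
    rw [if_neg hmod3, hcast, htn]
    have e : i₀ + 1 + ((n - 1 : ℕ) : ZMod n) = i₀ := by
      have : ((1 + (n - 1) : ℕ) : ZMod n) = 0 := by
        rw [show 1 + (n - 1) = n by omega]
        exact ZMod.natCast_self n
      push_cast at this
      rw [add_assoc]
      rw [show (1 : ZMod n) + ((n-1 : ℕ) : ZMod n) = 0 from this, add_zero]
    rw [e, hb0]
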